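/- Let σ be a positive natural number, δt > 0 and c ∈ ℝ, and let u, w : ℝ → ℂ be Schwartz functions. Write ū := (u + w)/2. If for every x ∈ ℝ the mid-point scheme equation holds: i (w(x) − u(x))/δt + c · ū''(x) + |ū(x)|^{2σ} ū(x) = 0, then the charge conservation law holds: ∫_ℝ |w(x)|² dx = ∫_ℝ |u(x)|² dx (Proposition 3.1, charge conservation of the mid-point scheme, applied pathwise with c = δW_n/δt). -/

import Mathlib

open Complex MeasureTheory Filter Set

private lemma schwartz_bounded (f : SchwartzMap ℝ ℂ) : ∃ C, ∀ x, ‖f x‖ ≤ C := by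
  refine ⟨‖f.toBoundedContinuousFunction‖, fun x => ?_⟩
  simpa using f.toBoundedContinuousFunction.norm_coe_le_norm x

private lemma schwartz_tendsto_zero (f : SchwartzMap ℝ ℂ) (l : Filter ℝ)
    (hl : l ≤ Filter.cocompact ℝ) : Tendsto (⇑f) l (nhds 0) := by
  have := f.toZeroAtInfty.zero_at_infty'
  simp only [SchwartzMap.toZeroAtInfty] at this
  exact this.mono_left hl

private lemma sq_abs_integrable (f : SchwartzMap ℝ ℂ) :
    Integrable (fun x => (‖f x‖) ^ 2) := by
  obtain ⟨C, hC⟩ := schwartz_bounded f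
  refine ((f.integrable (μ := volume)).norm.const_mul C).mono' ?_ ?_
  · exact ((continuous_norm.comp f.continuous).pow 2).aestronglyMeasurable
  · filter_upwards with x
    have : ‖f x‖ = ‖f x‖ := rfl
    rw [Real.norm_eq_abs, _root_.abs_of_nonneg (by positivity), pow_two, this]
    exact mul_le_mul_of_nonneg_right (hC x) (norm_nonneg _)

/-- charge conservation of the mid-point scheme (pathwise, `c = δW_n/δt`):
if Schwartz functions `u, w` satisfy `i(w−u)/δt + c ū'' + |ū|^{2σ} ū = 0` with
`ū = (u+w)/2`, then `∫ |w|² = ∫ |u|²`. -/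
theorem stmt_12 (σ : ℕ) (hσ : 0 < σ) (δt : ℝ) (hδt : 0 < δt) (c : ℝ)
    (u w : SchwartzMap ℝ ℂ)
    (ubar : ℝ → ℂ) (hubar : ∀ x, ubar x = (u x + w x) / 2)
    (hscheme : ∀ x : ℝ,
      Complex.I * (w x - u x) / (δt : ℂ) + (c : ℂ) * deriv (deriv ubar) x
        + ((Complex.normSq (ubar x) : ℂ)) ^ σ * ubar x = 0) :
    ∫ x : ℝ, (‖w x‖) ^ 2 = ∫ x : ℝ, (‖u x‖) ^ 2 := by
  set v : SchwartzMap ℝ ℂ := (2 : ℂ)⁻¹ • (u + w) with hv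
  have hveq : ubar = ⇑v := by
    funext x
    simp [hv, hubar x, SchwartzMap.smul_apply, SchwartzMap.add_apply, smul_eq_mul]
    ring
  set v1 : SchwartzMap ℝ ℂ := SchwartzMap.derivCLM ℝ ℂ v with hv1
  set v2 : SchwartzMap ℝ ℂ := SchwartzMap.derivCLM ℝ ℂ v1 with hv2
  have hd1 : ∀ x, HasDerivAt (⇑v) (v1 x) x := fun x => by
    simpa [hv1, SchwartzMap.derivCLM_apply] using v.differentiableAt.hasDerivAt
  have hd2 : ∀ x, HasDerivAt (⇑v1) (v2 x) x := fun x => by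
    simpa [hv2, SchwartzMap.derivCLM_apply] using v1.differentiableAt.hasDerivAt
  have hdd : deriv (deriv ubar) = ⇑v2 := by
    rw [hveq]
    have h1 : deriv (⇑v) = ⇑v1 := funext fun x => ((hd1 x).deriv)
    rw [h1]
    exact funext fun x => ((hd2 x).deriv)
  -- the pointwise identity
  set F : ℝ → ℝ := fun x => (v2 x * (starRingEnd ℂ) (v x)).im with hF
  have hkey : ∀ x, (‖w x‖) ^ 2 - (‖u x‖) ^ 2 = (-2 * δt * c) * F x := by
    intro x
    have h := hscheme x
    rw [hdd] at h
    have hz : (2 : ℂ) * v x = u x + w x := by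
      rw [← hveq, hubar x]; ring
    have hδ : (δt : ℂ) ≠ 0 := Complex.ofReal_ne_zero.mpr (ne_of_gt hδt)
    rw [hveq] at h
    have h' : Complex.I * (w x - u x) + (δt : ℂ) * c * v2 x
        + (((δt * Complex.normSq (v x) ^ σ : ℝ)) : ℂ) * v x = 0 := by
      field_simp at h
      push_cast
      linear_combination h
    have hre := congrArg Complex.re h'
    have him := congrArg Complex.im h'
    have hzre := congrArg Complex.re hz
    have hzim := congrArg Complex.im hz
    simp only [Complex.add_re, Complex.add_im, Complex.mul_re, Complex.mul_im,
      Complex.sub_re, Complex.sub_im, Complex.I_re, Complex.I_im, Complex.ofReal_re,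
      Complex.ofReal_im, Complex.zero_re, Complex.zero_im, Complex.re_ofNat,
      Complex.im_ofNat] at hre him hzre hzim
    simp only [hF, Complex.sq_norm, Complex.normSq_apply, Complex.mul_im,
      Complex.conj_re, Complex.conj_im, RingHom.coe_coe]
    linear_combination (2*(v x).re) * him - (2*(v x).im) * hre
      - ((w x).re - (u x).re) * hzre - ((w x).im - (u x).im) * hzim
  -- F is the derivative of g, which vanishes at infinity
  set g : ℝ → ℝ := fun x => (v1 x * (starRingEnd ℂ) (v x)).im with hg
  have hgderiv : ∀ x, HasDerivAt g (F x) x := by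
    intro x
    have h1 : HasDerivAt (fun y => v1 y * (starRingEnd ℂ) (v y))
        (v2 x * (starRingEnd ℂ) (v x) + v1 x * (starRingEnd ℂ) (v1 x)) x :=
      (hd2 x).mul (hd1 x).star
    have h2 : HasDerivAt (fun y => (v1 y * (starRingEnd ℂ) (v y)).im)
        ((v2 x * (starRingEnd ℂ) (v x) + v1 x * (starRingEnd ℂ) (v1 x)).im) x :=
      Complex.imCLM.hasFDerivAt.comp_hasDerivAt x h1
    have h3 : (v2 x * (starRingEnd ℂ) (v x) + v1 x * (starRingEnd ℂ) (v1 x)).im = F x := by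
      simp only [hF, Complex.add_im, Complex.mul_conj, Complex.ofReal_im, add_zero]
    exact h3 ▸ h2
  have hcontF : Continuous F := by
    have : Continuous fun x => v2 x * (starRingEnd ℂ) (v x) :=
      v2.continuous.mul (Complex.continuous_conj.comp v.continuous)
    exact Complex.continuous_im.comp this
  have hintF : Integrable F := by
    obtain ⟨C, hC⟩ := schwartz_bounded v2
    refine (((v.integrable (μ := volume)).norm.const_mul C)).mono'
      hcontF.aestronglyMeasurable ?_
    filter_upwards with x
    calc ‖F x‖ ≤ ‖v2 x * (starRingEnd ℂ) (v x)‖ :=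
          Complex.abs_im_le_norm (v2 x * (starRingEnd ℂ) (v x))
      _ = ‖v2 x‖ * ‖v x‖ := by rw [norm_mul, RCLike.norm_conj]
      _ ≤ C * ‖v x‖ := mul_le_mul_of_nonneg_right (hC x) (norm_nonneg _)
  have hgtend : ∀ l : Filter ℝ, l ≤ Filter.cocompact ℝ → Tendsto g l (nhds 0) := by
    intro l hl
    have h1 := (schwartz_tendsto_zero v1 l hl).norm
    have h2 := (schwartz_tendsto_zero v l hl).norm
    have h3 : Tendsto (fun x => ‖v1 x‖ * ‖v x‖) l (nhds 0) := by
      simpa using h1.mul h2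
    refine squeeze_zero_norm (fun x => ?_) h3
    calc ‖g x‖ ≤ ‖v1 x * (starRingEnd ℂ) (v x)‖ :=
          Complex.abs_im_le_norm (v1 x * (starRingEnd ℂ) (v x))
      _ = ‖v1 x‖ * ‖v x‖ := by rw [norm_mul, RCLike.norm_conj]
  have hIoi : ∫ x in Ioi (0:ℝ), F x = 0 - g 0 :=
    integral_Ioi_of_hasDerivAt_of_tendsto' (fun x _ => hgderiv x)
      hintF.integrableOn (hgtend atTop atTop_le_cocompact)
  have hIic : ∫ x in Iic (0:ℝ), F x = g 0 - 0 :=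
    integral_Iic_of_hasDerivAt_of_tendsto' (fun x _ => hgderiv x)
      hintF.integrableOn (hgtend atBot atBot_le_cocompact)
  have hFzero : ∫ x : ℝ, F x = 0 := by
    rw [← intervalIntegral.integral_Iic_add_Ioi hintF.integrableOn hintF.integrableOn, hIoi, hIic]
    ring
  have hIu := sq_abs_integrable u
  have hIw := sq_abs_integrable w
  have hsub : ∫ x : ℝ, ((‖w x‖) ^ 2 - (‖u x‖) ^ 2)
      = (-2 * δt * c) * ∫ x : ℝ, F x := by
    rw [← integral_const_mul]
    exact integral_congr_ae (Filter.Eventually.of_forall hkey)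
  rw [integral_sub hIw hIu, hFzero, mul_zero, sub_eq_zero] at hsub
  exact hsub
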